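/- Let v: 2^[n] → ℝ₊ be a set function. Suppose that for every positive integer r and every r-regular multihypergraph G on [n] (i.e., a finite multiset of nonempty subsets of [n] such that every index i ∈ [n] lies in exactly r members of G, counted with multiplicity), one has v([n]) ≥ (1/r) ∑_{s∈G} v(s). Then v([n]) ≥ ∑_{∅≠s⊆[n]} β_s v(s) holds for every fractional partition β on [n]. -/

import Mathlib

lemma filter_sum_card {α γ : Type*} (M : Finset α) (m : α → Multiset γ)
    (p : γ → Prop) [DecidablePred p] :
    ((∑ a ∈ M, m a).filter p).card = ∑ a ∈ M, ((m a).filter p).card := by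
  classical
  induction M using Finset.induction with
  | empty => simp
  | insert _ _ h ih => simp [Finset.sum_insert h, Multiset.filter_add, ih]

lemma card_filter_replicate {γ : Type*} (kk : ℕ) (a : γ) (p : γ → Prop)
    [DecidablePred p] :
    ((Multiset.replicate kk a).filter p).card = if p a then kk else 0 := by
  induction kk with
  | zero => simp
  | succ m ih =>
      by_cases h : p a <;>
        simp [Multiset.replicate_succ, Multiset.filter_cons, h, ih]

lemma map_sum_sum {α γ : Type*} (M : Finset α) (m : α → Multiset γ) (g : γ → ℝ) :
    ((∑ a ∈ M, m a).map g).sum = ∑ a ∈ M, ((m a).map g).sum := by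
  classical
  induction M using Finset.induction with
  | empty => simp
  | insert _ _ h ih => simp [Finset.sum_insert h, ih]

theorem stmt3 (n : ℕ) (hn : 0 < n) (v : Finset (Fin n) → ℝ) (hv0 : ∀ s, 0 ≤ v s)
    (hyp : ∀ r : ℕ, 0 < r → ∀ G : Multiset (Finset (Fin n)),
      (∀ s ∈ G, s.Nonempty) →
      (∀ i : Fin n, (G.filter (fun s => i ∈ s)).card = r) →
      (1 / (r : ℝ)) * (G.map v).sum ≤ v Finset.univ)
    (β : Finset (Fin n) → ℝ) (hβ0 : ∀ s, 0 ≤ β s)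
    (hβ : ∀ i : Fin n,
      ∑ s ∈ Finset.univ.filter (fun s : Finset (Fin n) => i ∈ s), β s = 1) :
    ∑ s ∈ Finset.univ.filter (fun s : Finset (Fin n) => s.Nonempty), β s * v s
      ≤ v Finset.univ := by
  classical
  set S := Finset.univ.filter (fun s : Finset (Fin n) => s.Nonempty) with hS
  have key : ∀ r : ℕ, 0 < r →
      ∑ s ∈ S, β s * v s - (∑ s ∈ S, v s) / r ≤ v Finset.univ := by
    intro r hr
    have hr' : (0:ℝ) < r := by exact_mod_cast hr
    set k : Finset (Fin n) → ℕ := fun s => ⌊β s * r⌋₊ with hk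
    set c : Fin n → ℕ := fun i => ∑ s ∈ Finset.univ.filter (fun s => i ∈ s), k s with hc'
    have hfloor : ∀ s, (k s : ℝ) ≤ β s * r := fun s =>
      Nat.floor_le (mul_nonneg (hβ0 s) hr'.le)
    have hc : ∀ i, c i ≤ r := by
      intro i
      have h : ((c i : ℕ) : ℝ) ≤ (r : ℝ) := by
        rw [hc']
        push_cast
        calc ∑ s ∈ Finset.univ.filter (fun s => i ∈ s), ((k s : ℝ))
            ≤ ∑ s ∈ Finset.univ.filter (fun s => i ∈ s), β s * r :=
              Finset.sum_le_sum fun s _ => hfloor s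
          _ = (∑ s ∈ Finset.univ.filter (fun s => i ∈ s), β s) * r := by
              rw [Finset.sum_mul]
          _ = r := by rw [hβ i, one_mul]
      exact_mod_cast h
    set G := (∑ s ∈ S, Multiset.replicate (k s) s)
        + ∑ i : Fin n, Multiset.replicate (r - c i) ({i} : Finset (Fin n)) with hG
    have hne : ∀ s ∈ G, s.Nonempty := by
      intro s hs
      rw [hG, Multiset.mem_add] at hs
      rcases hs with hs | hs
      · rw [Multiset.mem_sum] at hs
        obtain ⟨t, ht, hst⟩ := hs
        rw [Multiset.eq_of_mem_replicate hst]
        exact (Finset.mem_filter.mp ht).2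
      · rw [Multiset.mem_sum] at hs
        obtain ⟨j, _, hsj⟩ := hs
        rw [Multiset.eq_of_mem_replicate hsj]
        exact Finset.singleton_nonempty j
    have hreg : ∀ i : Fin n, (G.filter (fun s => i ∈ s)).card = r := by
      intro i
      rw [hG, Multiset.filter_add, Multiset.card_add, filter_sum_card, filter_sum_card]
      have h1 : ∑ s ∈ S, ((Multiset.replicate (k s) s).filter (fun t => i ∈ t)).card
          = c i := by
        simp only [hc']
        rw [show (Finset.univ.filter (fun s => i ∈ s)) = S.filter (fun s => i ∈ s) by
          ext s
          simp only [Finset.mem_filter, Finset.mem_univ, true_and, hS]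
          exact ⟨fun h => ⟨⟨i, h⟩, h⟩, fun h => h.2⟩]
        refine Eq.trans (Finset.sum_congr rfl fun s _ =>
          card_filter_replicate (k s) s (fun t => i ∈ t)) ?_
        exact (Finset.sum_filter (fun s => i ∈ s) k).symm
      have h2 : ∑ j : Fin n,
          ((Multiset.replicate (r - c j) ({j} : Finset (Fin n))).filter
            (fun t => i ∈ t)).card = r - c i := by
        rw [Finset.sum_eq_single i]
        · rw [card_filter_replicate]
          simp
        · intro j _ hji
          rw [card_filter_replicate]
          simp [Finset.mem_singleton, (hji.symm : i ≠ j)]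
        · simp
      rw [h1, h2, Nat.add_sub_cancel' (hc i)]
    have hmain := hyp r hr G hne hreg
    have hsum : (G.map v).sum = ∑ s ∈ S, (k s : ℝ) * v s
        + ∑ i : Fin n, ((r - c i : ℕ) : ℝ) * v {i} := by
      rw [hG, Multiset.map_add, Multiset.sum_add, map_sum_sum, map_sum_sum]
      congr 1
      · exact Finset.sum_congr rfl fun s _ => by
          simp [Multiset.map_replicate, Multiset.sum_replicate, nsmul_eq_mul]
      · exact Finset.sum_congr rfl fun j _ => by
          simp [Multiset.map_replicate, Multiset.sum_replicate, nsmul_eq_mul]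
    have hlb : ∑ s ∈ S, (k s : ℝ) * v s ≤ (G.map v).sum := by
      rw [hsum]
      have h : 0 ≤ ∑ i : Fin n, ((r - c i : ℕ) : ℝ) * v {i} :=
        Finset.sum_nonneg fun i _ => mul_nonneg (by positivity) (hv0 _)
      linarith
    have step : ∑ s ∈ S, ((k s : ℝ)/r) * v s ≤ v Finset.univ := by
      calc ∑ s ∈ S, ((k s : ℝ)/r) * v s
          = (1/(r:ℝ)) * ∑ s ∈ S, (k s : ℝ) * v s := by
            rw [Finset.mul_sum]
            exact Finset.sum_congr rfl fun s _ => by ring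
        _ ≤ (1/(r:ℝ)) * (G.map v).sum := by
            exact mul_le_mul_of_nonneg_left hlb (by positivity)
        _ ≤ v Finset.univ := hmain
    have step2 : ∑ s ∈ S, (β s - 1/r) * v s ≤ ∑ s ∈ S, ((k s : ℝ)/r) * v s := by
      refine Finset.sum_le_sum fun s _ => ?_
      refine mul_le_mul_of_nonneg_right ?_ (hv0 s)
      rw [sub_le_iff_le_add, ← add_div, le_div_iff₀ hr']
      have h := Nat.lt_floor_add_one (β s * r)
      push_cast
      rw [hk]
      push_cast
      linarith
    have hexp : ∑ s ∈ S, (β s - 1/r) * v s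
        = ∑ s ∈ S, β s * v s - (∑ s ∈ S, v s) / r := by
      rw [Finset.sum_div, ← Finset.sum_sub_distrib]
      exact Finset.sum_congr rfl fun s _ => by field_simp
    linarith [hexp ▸ step2.trans step]
  -- Now take r → ∞.
  by_contra hcon
  push_neg at hcon
  set A := ∑ s ∈ S, β s * v s
  set C := ∑ s ∈ S, v s with hC
  have hC0 : 0 ≤ C := Finset.sum_nonneg fun s _ => hv0 s
  have hδ : 0 < A - v Finset.univ := by linarith
  obtain ⟨r, hrgt⟩ := exists_nat_gt (C / (A - v Finset.univ))
  have hr0 : 0 < r := by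
    by_contra h
    push_neg at h
    interval_cases r
    simp only [Nat.cast_zero] at hrgt
    have := div_nonneg hC0 hδ.le
    linarith
  have hkey := key r hr0
  have hr' : (0:ℝ) < r := by exact_mod_cast hr0
  have : C / r < A - v Finset.univ := by
    rw [div_lt_iff₀ hr']
    calc C = (C / (A - v Finset.univ)) * (A - v Finset.univ) := by field_simp
      _ < r * (A - v Finset.univ) := mul_lt_mul_of_pos_right hrgt hδ
      _ = (A - v Finset.univ) * r := by ring
  linarith
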